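/- Let p₁, p₂ : [a,b] → ℝ be twice differentiable with p₁ > 0, p₂ > 0, satisfying p₁(θ)p₂(θ) = p₁'(θ)p₂'(θ) on [a,b]. If p₁' > 0, p₂' > 0, and p₂'' < 0 on [a,b], then p₁'' > 0 on [a,b]. -/
import Mathlib


/-- Classification of pairs of support functions with p₁p₂ = p₁'p₂': case (1). -/
theorem classification_case_10 (a b : ℝ) (hab : a < b) (p₁ p₂ : ℝ → ℝ)
    (hp₁ : Differentiable ℝ p₁) (hp₁' : Differentiable ℝ (deriv p₁))
    (hp₂ : Differentiable ℝ p₂) (hp₂' : Differentiable ℝ (deriv p₂))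
    (hpos₁ : ∀ θ ∈ Set.Icc a b, 0 < p₁ θ)
    (hpos₂ : ∀ θ ∈ Set.Icc a b, 0 < p₂ θ)
    (hcond : ∀ θ ∈ Set.Icc a b, p₁ θ * p₂ θ = deriv p₁ θ * deriv p₂ θ)
    (h₁ : ∀ θ ∈ Set.Icc a b, 0 < deriv p₁ θ)
    (h₂ : ∀ θ ∈ Set.Icc a b, 0 < deriv p₂ θ)
    (h₃ : ∀ θ ∈ Set.Icc a b, deriv (deriv p₂) θ < 0) :
    ∀ θ ∈ Set.Icc a b, 0 < deriv (deriv p₁) θ := by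
  intro θ hθ
  set f : ℝ → ℝ := fun x => p₁ x * p₂ x with hf
  set g : ℝ → ℝ := fun x => deriv p₁ x * deriv p₂ x with hg
  have hfd : DifferentiableAt ℝ f θ := (hp₁ θ).mul (hp₂ θ)
  have hgd : DifferentiableAt ℝ g θ := (hp₁' θ).mul (hp₂' θ)
  have hud : UniqueDiffWithinAt ℝ (Set.Icc a b) θ :=
    (uniqueDiffOn_Icc hab) θ hθ
  have heq : Set.EqOn f g (Set.Icc a b) := fun x hx => hcond x hx
  have hdw : derivWithin f (Set.Icc a b) θ = derivWithin g (Set.Icc a b) θ :=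
    derivWithin_congr heq (hcond θ hθ)
  rw [hfd.derivWithin hud, hgd.derivWithin hud] at hdw
  have e1 : deriv f θ = deriv p₁ θ * p₂ θ + p₁ θ * deriv p₂ θ :=
    deriv_mul (hp₁ θ) (hp₂ θ)
  have e2 : deriv g θ = deriv (deriv p₁) θ * deriv p₂ θ + deriv p₁ θ * deriv (deriv p₂) θ :=
    deriv_mul (hp₁' θ) (hp₂' θ)
  rw [e1, e2] at hdw
  have h1 := hpos₁ θ hθ
  have h2 := hpos₂ θ hθ
  have h3 := h₁ θ hθ
  have h4 := h₂ θ hθ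
  have h5 := h₃ θ hθ
  nlinarith [mul_pos h3 h2, mul_pos h1 h4, mul_pos h3 (neg_pos.mpr h5)]
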